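/- Let (a_n)_{n≥0} be a sequence of nonnegative real numbers such that Δ := limsup_{n→∞} a_n − a_0 is finite. Let (a_n^m)_{n≥0, m≥m_0} be a double sequence of nonnegative real numbers such that a_n^m ≤ a_n^{m+1} for all n ≥ 0 and m ≥ m_0, such that lim_{m→∞} a_n^m = a_n for every n ≥ 0, and such that liminf_{n→∞} a_n^m ≥ a_0^m for every m ≥ m_0. Then limsup_{m→∞} sup_{n≥0} |a_n − a_n^m| ≤ Δ (the supremum over n taken in [0,+∞]). -/

import Mathlib

open scoped ENNReal NNReal
open Filter

/-- Strengthened Dini lemma: if `(a n)` are nonnegative reals whose limsup exceeds `a 0`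
by a finite amount `Δ ≥ 0`, and `(b m n)` is a double sequence of nonnegative reals,
nondecreasing in `m ≥ m₀`, converging to `a n` as `m → ∞` for every `n`, and satisfying
`liminf_{n→∞} b m n ≥ b m 0` for every `m ≥ m₀`, then
`limsup_{m→∞} sup_{n} |a n − b m n| ≤ Δ` (the supremum over `n` taken in `[0,∞]`). -/
theorem strengthened_dini (m₀ : ℕ) (a : ℕ → ℝ≥0) (b : ℕ → ℕ → ℝ≥0) (Δ : ℝ≥0)
    (hΔ : Filter.limsup (fun n => (a n : ℝ≥0∞)) Filter.atTop = (a 0 : ℝ≥0∞) + Δ)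
    (hmono : ∀ n : ℕ, ∀ m : ℕ, m₀ ≤ m → b m n ≤ b (m + 1) n)
    (hlim : ∀ n : ℕ, Filter.Tendsto (fun m => b m n) Filter.atTop (nhds (a n)))
    (hliminf : ∀ m : ℕ, m₀ ≤ m →
      (b m 0 : ℝ≥0∞) ≤ Filter.liminf (fun n => (b m n : ℝ≥0∞)) Filter.atTop) :
    Filter.limsup
      (fun m => ⨆ n : ℕ, (ENNReal.ofReal |(a n : ℝ) - (b m n : ℝ)|)) Filter.atTop
      ≤ (Δ : ℝ≥0∞) := by
  -- monotonicity in m, transitive version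
  have hmono' : ∀ n m m', m₀ ≤ m → m ≤ m' → b m n ≤ b m' n := by
    intro n m m' hm hmm'
    induction m', hmm' using Nat.le_induction with
    | base => exact le_rfl
    | succ k hk ih => exact ih.trans (hmono n k (hm.trans hk))
  -- b m n ≤ a n for m ≥ m₀
  have hle : ∀ m, m₀ ≤ m → ∀ n, b m n ≤ a n := by
    intro m hm n
    exact ge_of_tendsto (hlim n)
      (eventually_atTop.2 ⟨m, fun m' h => hmono' n m m' hm h⟩)
  refine ENNReal.le_of_forall_pos_le_add fun ε hε _ => ?_
  have hεR : (0 : ℝ) < (ε : ℝ) := hε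
  -- (A) eventual bound on a n
  have hA : ∀ᶠ n in atTop, (a n : ℝ) ≤ (a 0 : ℝ) + Δ + (ε : ℝ) / 4 := by
    have h1 : Filter.limsup (fun n => (a n : ℝ≥0∞)) atTop
        < ((a 0 + Δ + ε / 4 : ℝ≥0) : ℝ≥0∞) := by
      rw [hΔ]
      push_cast
      refine ENNReal.lt_add_right (by finiteness) ?_
      exact (ENNReal.div_pos (by exact_mod_cast hε.ne') (by norm_num)).ne'
    filter_upwards [Filter.eventually_lt_of_limsup_lt h1] with n hn
    have h2 : a n ≤ a 0 + Δ + ε / 4 := by exact_mod_cast hn.le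
    have h3 := (NNReal.coe_le_coe.2 h2)
    push_cast at h3
    linarith
  obtain ⟨N₁, hN₁⟩ := eventually_atTop.1 hA
  -- (B) choose m₁
  have hB : ∀ᶠ m in atTop, (a 0 : ℝ) - (ε : ℝ) / 4 < (b m 0 : ℝ) := by
    have ht : Tendsto (fun m => (b m 0 : ℝ)) atTop (nhds (a 0 : ℝ)) :=
      NNReal.tendsto_coe.2 (hlim 0)
    exact ht.eventually (eventually_gt_nhds (by linarith))
  obtain ⟨m₁, hm₁B, hm₁0⟩ := ((hB.and (eventually_ge_atTop m₀)).exists)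
  -- (C) eventual lower bound on b m₁ n
  have hC : ∀ᶠ n in atTop, (b m₁ 0 : ℝ) - (ε : ℝ) / 4 ≤ (b m₁ n : ℝ) := by
    by_cases hcase : (b m₁ 0 : ℝ) ≤ (ε : ℝ) / 4
    · filter_upwards with n
      have : (0 : ℝ) ≤ (b m₁ n : ℝ) := (b m₁ n).coe_nonneg
      linarith
    · push_neg at hcase
      have he' : (ε / 4 : ℝ≥0) < b m₁ 0 := by
        rw [← NNReal.coe_lt_coe]
        push_cast
        linarith
      have hlt : ((b m₁ 0 - ε / 4 : ℝ≥0) : ℝ≥0∞)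
          < Filter.liminf (fun n => (b m₁ n : ℝ≥0∞)) atTop := by
        refine lt_of_lt_of_le ?_ (hliminf m₁ hm₁0)
        exact_mod_cast tsub_lt_self (lt_trans (by positivity) he') (by positivity)
      filter_upwards [Filter.eventually_lt_of_lt_liminf hlt] with n hn
      have h2 : b m₁ 0 - ε / 4 ≤ b m₁ n := by exact_mod_cast hn.le
      have h3 := NNReal.coe_le_coe.2 h2
      rw [NNReal.coe_sub he'.le] at h3
      push_cast at h3
      linarith
  obtain ⟨N₂, hN₂⟩ := eventually_atTop.1 hC
  set N := max N₁ N₂ with hN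
  -- (D) eventually in m, good on all n < N
  have hD : ∀ᶠ m in atTop, ∀ n ∈ Finset.range N, (a n : ℝ) - (ε : ℝ) ≤ (b m n : ℝ) := by
    rw [Filter.eventually_all_finset]
    intro n _
    have ht : Tendsto (fun m => (b m n : ℝ)) atTop (nhds (a n : ℝ)) :=
      NNReal.tendsto_coe.2 (hlim n)
    filter_upwards [ht.eventually (eventually_gt_nhds (show (a n : ℝ) - ε < a n by linarith))]
      with m hm using hm.le
  -- conclude
  refine Filter.limsup_le_of_le (by isBoundedDefault) ?_
  filter_upwards [hD, eventually_ge_atTop m₁] with m hmD hmm₁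
  have hm0 : m₀ ≤ m := hm₁0.trans hmm₁
  refine iSup_le fun n => ?_
  have hb : (b m n : ℝ) ≤ a n := NNReal.coe_le_coe.2 (hle m hm0 n)
  have key : (a n : ℝ) - (b m n : ℝ) ≤ (Δ : ℝ) + ε := by
    rcases lt_or_ge n N with h | h
    · have h1 := hmD n (Finset.mem_range.2 h)
      have : (0 : ℝ) ≤ (Δ : ℝ) := Δ.coe_nonneg
      linarith
    · have h1 := hN₁ n (le_trans (le_max_left _ _) h)
      have h2 := hN₂ n (le_trans (le_max_right _ _) h)
      have h3 : (b m₁ n : ℝ) ≤ (b m n : ℝ) :=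
        NNReal.coe_le_coe.2 (hmono' n m₁ m hm₁0 hmm₁)
      linarith
  calc ENNReal.ofReal |(a n : ℝ) - (b m n : ℝ)|
      = ENNReal.ofReal ((a n : ℝ) - (b m n : ℝ)) := by
        rw [abs_of_nonneg (by linarith)]
    _ ≤ ENNReal.ofReal ((Δ : ℝ) + (ε : ℝ)) := ENNReal.ofReal_le_ofReal key
    _ = (Δ : ℝ≥0∞) + (ε : ℝ≥0∞) := by
        rw [ENNReal.ofReal_add Δ.coe_nonneg ε.coe_nonneg,
          ENNReal.ofReal_coe_nnreal, ENNReal.ofReal_coe_nnreal]
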